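/- For every natural number n ≥ 1, the sum Σ_{w=1}^{n} C(n,w)·3^w/(1 + w(w−1)) is at least (4^n − 1)/(n² − n + 1). -/
import Mathlib


theorem total_removed_lower_bound (n : ℕ) (hn : 1 ≤ n) :
    ∑ w ∈ Finset.Icc 1 n, (n.choose w : ℝ) * 3 ^ w / (1 + w * (w - 1))
      ≥ ((4 : ℝ) ^ n - 1) / ((n : ℝ) ^ 2 - n + 1) := by
  have hn1 : (1:ℝ) ≤ n := by exact_mod_cast hn
  have hD : (0:ℝ) < (n:ℝ)^2 - n + 1 := by nlinarith
  have hsum : ∑ w ∈ Finset.range (n+1), (n.choose w : ℝ) * 3 ^ w = 4 ^ n := by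
    have h := add_pow (3:ℝ) 1 n
    simp only [one_pow, mul_one] at h
    rw [show (3:ℝ) + 1 = 4 by norm_num] at h
    rw [h]
    exact Finset.sum_congr rfl (fun k _ => by ring)
  have hins : Finset.range (n+1) = insert 0 (Finset.Icc 1 n) := by
    ext x; simp [Finset.mem_Icc, Nat.lt_succ_iff]; omega
  have hIcc : ∑ w ∈ Finset.Icc 1 n, (n.choose w : ℝ) * 3 ^ w = 4 ^ n - 1 := by
    rw [hins, Finset.sum_insert (by simp)] at hsum
    simp at hsum
    linarith
  have key : ∑ w ∈ Finset.Icc 1 n, (n.choose w : ℝ) * 3 ^ w / ((n:ℝ)^2 - n + 1)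
      ≤ ∑ w ∈ Finset.Icc 1 n, (n.choose w : ℝ) * 3 ^ w / (1 + w * (w - 1)) := by
    apply Finset.sum_le_sum
    intro w hw
    simp only [Finset.mem_Icc] at hw
    have hw1 : (1:ℝ) ≤ w := by exact_mod_cast hw.1
    have hwn : (w:ℝ) ≤ n := by exact_mod_cast hw.2
    have hd : (0:ℝ) < 1 + w * (w - 1) := by nlinarith
    apply div_le_div_of_nonneg_left _ hd _
    · positivity
    · nlinarith
  calc ∑ w ∈ Finset.Icc 1 n, (n.choose w : ℝ) * 3 ^ w / (1 + w * (w - 1))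
      ≥ ∑ w ∈ Finset.Icc 1 n, (n.choose w : ℝ) * 3 ^ w / ((n:ℝ)^2 - n + 1) := key
    _ = (∑ w ∈ Finset.Icc 1 n, (n.choose w : ℝ) * 3 ^ w) / ((n:ℝ)^2 - n + 1) := by
        rw [Finset.sum_div]
    _ = ((4 : ℝ) ^ n - 1) / ((n : ℝ) ^ 2 - n + 1) := by rw [hIcc]
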